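/- The refinement relation `⊑` on conditions is transitive: for all conditions s₀, s₁, s₂ over Σ, if s₀ ⊑ s₁ and s₁ ⊑ s₂, then s₀ ⊑ s₂ (this is the key fact enabling incremental strengthening of specifications across chained conditional refinements). -/

import Mathlib

/-- Call depths: `none` is `∞` and `some o` is `⟨o⟩`. -/
abbrev Depth := Option Ordinal

/-- The strict order on call depths. -/
def depthLt (d₁ d₂ : Depth) : Prop :=
  ∃ o₁, d₁ = some o₁ ∧ (d₂ = none ∨ ∃ o₂, d₂ = some o₂ ∧ o₁ < o₂)

/-- The non-strict order on call depths. -/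
def depthLe (d₁ d₂ : Depth) : Prop :=
  d₁ = d₂ ∨ depthLt d₁ d₂

/-- The frame-preserving update modality on predicates over a PCM. -/
def upd {R : Type*} [AddCommMonoid R] (valid : R → Prop) (P : R → Prop) : R → Prop :=
  fun a => ∀ c, valid (a + c) → ∃ b, valid (b + c) ∧ P b

/-- Entailment between predicates over a PCM. -/
def entails {R : Type*} [AddCommMonoid R] (valid : R → Prop) (P Q : R → Prop) : Prop :=
  ∀ a, valid a → P a → Q a

/-- A condition `(W, D, P, Q)` over a PCM `R` with values in `V`. -/
structure Cond (R V : Type*) where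
  W : Type
  D : W → Depth.{u_3}
  P : W → V → V → R → Prop
  Q : W → V → V → R → Prop

/-- The refinement relation `⊑` on conditions. -/
def condRef {R V : Type*} [AddCommMonoid R] (valid : R → Prop)
    (s₀ s₁ : Cond R V) : Prop :=
  ∀ w₀ : s₀.W, ∃ w₁ : s₁.W,
    depthLe (s₁.D w₁) (s₀.D w₀) ∧
    (∀ x xa : V, entails valid (s₀.P w₀ x xa) (upd valid (s₁.P w₁ x xa))) ∧
    (∀ r ra : V, entails valid (s₁.Q w₁ r ra) (upd valid (s₀.Q w₀ r ra)))

theorem depthLe_trans {d₁ d₂ d₃ : Depth} (h₁ : depthLe d₁ d₂) (h₂ : depthLe d₂ d₃) :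
    depthLe d₁ d₃ := by
  rcases h₁ with rfl | ⟨o₁, rfl, h₁⟩
  · exact h₂
  rcases h₂ with rfl | ⟨o₂, rfl, h₂⟩
  · exact Or.inr ⟨o₁, rfl, h₁⟩
  rcases h₁ with h | ⟨o₂', ho, h₁⟩
  · cases h
  cases Option.some.inj ho
  rcases h₂ with rfl | ⟨o₃, rfl, h₂⟩
  · exact Or.inr ⟨o₁, rfl, Or.inl rfl⟩
  · exact Or.inr ⟨o₁, rfl, Or.inr ⟨o₃, rfl, h₁.trans h₂⟩⟩

theorem entails_upd_trans {R : Type*} [AddCommMonoid R] (valid : R → Prop)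
    (valid_add : ∀ a b : R, valid (a + b) → valid a)
    (P Q S : R → Prop) (h₁ : entails valid P (upd valid Q))
    (h₂ : entails valid Q (upd valid S)) : entails valid P (upd valid S) := by
  intro a ha hP c hc
  obtain ⟨b, hb, hQ⟩ := h₁ a ha hP c hc
  exact h₂ b (valid_add b c hb) hQ c hb

/-- The refinement relation `⊑` on conditions is transitive. -/
theorem condRef_trans {R V : Type*} [AddCommMonoid R]
    (valid : R → Prop) (valid_zero : valid 0)
    (valid_add : ∀ a b : R, valid (a + b) → valid a)
    (s₀ s₁ s₂ : Cond R V)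
    (h₀₁ : condRef valid s₀ s₁) (h₁₂ : condRef valid s₁ s₂) :
    condRef valid s₀ s₂ := by
  intro w₀
  obtain ⟨w₁, hd₁, hp₁, hq₁⟩ := h₀₁ w₀
  obtain ⟨w₂, hd₂, hp₂, hq₂⟩ := h₁₂ w₁
  refine ⟨w₂, depthLe_trans hd₂ hd₁, ?_, ?_⟩
  · intro x xa
    exact entails_upd_trans valid valid_add _ _ _ (hp₁ x xa) (hp₂ x xa)
  · intro r ra
    exact entails_upd_trans valid valid_add _ _ _ (hq₂ r ra) (hq₁ r ra)
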